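/- Let η₁, ..., ηₙ be pairwise distinct vectors in a real inner product space with ⟨ηᵢ, ηⱼ⟩ = κ for all i ≠ j, κ ≠ 0, and suppose at most one index i has ‖ηᵢ‖² = κ. If no index has ‖ηᵢ‖² = κ, then dim span{η₁,...,ηₙ} ≥ n - 1; if exactly one index has ‖ηᵢ‖² = κ, then dim span{η₁,...,ηₙ} = n. -/

import Mathlib

open RealInnerProductSpace

lemma stmt16_key {E : Type*} [NormedAddCommGroup E] [InnerProductSpace ℝ E]
    {n : ℕ} (η : Fin n → E) (κ : ℝ)
    (hinner : ∀ i j, i ≠ j → ⟪η i, η j⟫ = κ)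
    (c : Fin n → ℝ) (hc : ∑ j, c j • η j = 0) (i : Fin n) :
    (∑ j, c j) * κ + c i * (‖η i‖ ^ 2 - κ) = 0 := by
  have h0 : ⟪η i, ∑ j, c j • η j⟫ = 0 := by rw [hc, inner_zero_right]
  rw [inner_sum] at h0
  simp only [real_inner_smul_right] at h0
  have hsum : ∑ j, c j * ⟪η i, η j⟫
      = ∑ j, (c j * κ + if j = i then c i * (‖η i‖ ^ 2 - κ) else 0) := by
    refine Finset.sum_congr rfl fun j _ => ?_
    by_cases h : j = i
    · subst h
      rw [real_inner_self_eq_norm_sq]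
      simp; ring
    · rw [hinner i j (Ne.symm h)]
      simp [h]
  rw [hsum, Finset.sum_add_distrib, Finset.sum_ite_eq' Finset.univ i] at h0
  simpa [← Finset.sum_mul] using h0

/-- For pairwise distinct η₁, ..., ηₙ with pairwise inner products κ ≠ 0 and
at most one index with ‖ηᵢ‖² = κ: if no index has ‖ηᵢ‖² = κ then the span has
dimension ≥ n - 1; if exactly one index does, the span has dimension n. -/
theorem stmt16 {E : Type*} [NormedAddCommGroup E] [InnerProductSpace ℝ E]
    {n : ℕ} (η : Fin n → E) (κ : ℝ) (hκ : κ ≠ 0)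
    (hdist : Function.Injective η)
    (hinner : ∀ i j, i ≠ j → ⟪η i, η j⟫ = κ)
    (hone : ∀ i j, ‖η i‖ ^ 2 = κ → ‖η j‖ ^ 2 = κ → i = j) :
    ((∀ i, ‖η i‖ ^ 2 ≠ κ) →
      n - 1 ≤ Module.finrank ℝ (Submodule.span ℝ (Set.range η))) ∧
    ((∃ i, ‖η i‖ ^ 2 = κ) →
      Module.finrank ℝ (Submodule.span ℝ (Set.range η)) = n) := by
  constructor
  · intro hno
    rcases Nat.eq_zero_or_pos n with hn | hn
    · simp [hn]
    -- the linear map sending coefficients to the combination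
    set T : (Fin n → ℝ) →ₗ[ℝ] E := Fintype.linearCombination ℝ η with hT
    have hrange : LinearMap.range T = Submodule.span ℝ (Set.range η) :=
      Fintype.range_linearCombination ℝ η
    set v : Fin n → ℝ := fun i => κ / (κ - ‖η i‖ ^ 2) with hv
    have hv0 : v ≠ 0 := by
      intro h
      have := congrFun h ⟨0, hn⟩
      simp only [hv, Pi.zero_apply] at this
      exact hκ (by
        rcases div_eq_zero_iff.mp this with h' | h'
        · exact h'
        · exact absurd (by linarith [sub_eq_zero.mp h']) (hno ⟨0, hn⟩).symm.elim)
    have hker : LinearMap.ker T ≤ Submodule.span ℝ {v} := by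
      intro c hc
      have hc' : ∑ j, c j • η j = 0 := by
        simpa [hT, Fintype.linearCombination_apply] using hc
      rw [Submodule.mem_span_singleton]
      refine ⟨∑ j, c j, funext fun i => ?_⟩
      have hkey := stmt16_key η κ hinner c hc' i
      have hd : κ - ‖η i‖ ^ 2 ≠ 0 := fun h => (hno i) (by linarith [sub_eq_zero.mp h])
      simp only [Pi.smul_apply, smul_eq_mul, hv]
      field_simp
      linarith [hkey]
    have hfk : Module.finrank ℝ (LinearMap.ker T) ≤ 1 := by
      calc Module.finrank ℝ (LinearMap.ker T)
          ≤ Module.finrank ℝ (Submodule.span ℝ {v}) := Submodule.finrank_mono hker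
        _ = 1 := finrank_span_singleton hv0
    have hrn := LinearMap.finrank_range_add_finrank_ker T
    rw [hrange] at hrn
    have : Module.finrank ℝ (Fin n → ℝ) = n := Module.finrank_fin_fun ℝ
    omega
  · rintro ⟨i₀, hi₀⟩
    have hli : LinearIndependent ℝ η := by
      rw [Fintype.linearIndependent_iff]
      intro c hc
      have hs : (∑ j, c j) = 0 := by
        have hkey := stmt16_key η κ hinner c hc i₀
        rw [hi₀] at hkey
        simp at hkey
        rcases hkey with h | h
        · exact h
        · exact absurd h hκ
      have hzero : ∀ i, i ≠ i₀ → c i = 0 := by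
        intro i hi
        have hkey := stmt16_key η κ hinner c hc i
        rw [hs] at hkey
        have hd : ‖η i‖ ^ 2 - κ ≠ 0 := fun h =>
          hi (hone i i₀ (by linarith [sub_eq_zero.mp h]) hi₀)
        have : c i * (‖η i‖ ^ 2 - κ) = 0 := by linarith
        exact (mul_eq_zero.mp this).resolve_right hd
      intro i
      by_cases hi : i = i₀
      · subst hi
        have : (∑ j, c j) = c i := Finset.sum_eq_single i (fun j _ hj => hzero j hj)
          (fun h => absurd (Finset.mem_univ i) h)
        rw [this] at hs; exact hs
      · exact hzero i hi
    rw [finrank_span_eq_card hli, Fintype.card_fin]
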